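/- arXiv:2504.06960 — 2 statements merged into one kernel-verified Lean document; each statement's English description precedes it below -/
import Mathlib

section
/- Let m, c, r, k, j be integers with 2 ≤ c ≤ r ≤ m, 0 ≤ k ≤ ⌊m/c⌋ − 1, r = ⌊m/(k+1)⌋, and 0 ≤ j ≤ k. Then C(m−c−j, r−c) / C(m, r) ≥ (∏_{i=0}^{c−1} (r−i)/(m−i)) · ((c−1)/c)^c. -/
open Finset Real

private lemma exp_le_one_sub_aux {c : ℕ} (hc : 2 ≤ c) {x : ℝ} (hx0 : 0 ≤ x)
    (hx1 : (c : ℝ) * x ≤ 1) :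
    Real.exp ((c : ℝ) * Real.log (((c : ℝ) - 1) / c) * x) ≤ 1 - x := by
  have hc0 : (0 : ℝ) < c := by positivity
  set b : ℝ := ((c : ℝ) - 1) / c with hb
  have hbpos : 0 < b := by
    apply div_pos _ hc0
    have : (2 : ℝ) ≤ (c : ℝ) := by exact_mod_cast hc
    linarith
  have hxc : 0 ≤ (c : ℝ) * x := by positivity
  have hkey := convexOn_exp.2 (Set.mem_univ (Real.log b)) (Set.mem_univ (0 : ℝ))
    hxc (by linarith : (0:ℝ) ≤ 1 - (c : ℝ) * x) (by ring)
  simp only [smul_eq_mul, mul_zero, add_zero, Real.exp_zero, mul_one] at hkey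
  have hlb : Real.exp (Real.log b) = b := Real.exp_log hbpos
  rw [hlb] at hkey
  have h1b : 1 - b = 1 / (c : ℝ) := by
    rw [hb, eq_div_iff hc0.ne', sub_mul, div_mul_cancel₀ _ hc0.ne']; ring
  calc Real.exp ((c : ℝ) * Real.log b * x) = Real.exp ((c:ℝ) * x * Real.log b) := by
        ring_nf
    _ ≤ (c : ℝ) * x * b + (1 - (c : ℝ) * x) := hkey
    _ = 1 - ((c : ℝ) * x) * (1 - b) := by ring
    _ = 1 - x := by rw [h1b]; field_simp

/-- lower bound on the ratio of binomial coefficients appearing in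
the Clarkson–Shor sampling argument. -/
theorem choose_ratio_lower_bound (m c r k j : ℕ) (hc : 2 ≤ c) (hcr : c ≤ r) (hrm : r ≤ m)
    (hk : k ≤ m / c - 1) (hr : r = m / (k + 1)) (hj : j ≤ k) :
    (((m - c - j).choose (r - c) : ℝ)) / (m.choose r : ℝ)
      ≥ (∏ i ∈ Finset.range c, ((r - i : ℕ) : ℝ) / ((m - i : ℕ) : ℝ))
          * (((c : ℝ) - 1) / c) ^ c := by
  have hc0 : 0 < c := by omega
  -- basic nat facts
  have hrkm : r * (k + 1) ≤ m := by rw [hr]; exact Nat.div_mul_le_self m (k + 1)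
  have hrk : r * k + r ≤ m := by nlinarith [hrkm]
  have h2k : 2 * k ≤ r * k := Nat.mul_le_mul_right k (by omega)
  have hcjrk : c * j ≤ r * k := Nat.mul_le_mul hcr hj
  have hjcj : j ≤ c * j := Nat.le_mul_of_pos_left j hc0
  have hsjrk : (r - c) * j ≤ r * k := Nat.mul_le_mul (Nat.sub_le r c) hj
  -- positivity facts
  have hchoose : 0 < m.choose r := Nat.choose_pos hrm
  have hmdc : 0 < m.descFactorial c :=
    Nat.pos_of_ne_zero (by rw [Ne, Nat.descFactorial_eq_zero_iff_lt]; omega)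
  have hdF2 : 0 < (m - c).descFactorial (r - c) :=
    Nat.pos_of_ne_zero (by rw [Ne, Nat.descFactorial_eq_zero_iff_lt]; omega)
  -- the nat identity
  have hnat : (m - c - j).choose (r - c) * (m.descFactorial c * (m - c).descFactorial (r - c))
      = r.descFactorial c * (m - c - j).descFactorial (r - c) * m.choose r := by
    have h1 : (m - c).descFactorial (r - c) * m.descFactorial c = m.descFactorial r :=
      Nat.descFactorial_mul_descFactorial hcr
    have h2 : m.descFactorial r = r.factorial * m.choose r :=
      Nat.descFactorial_eq_factorial_mul_choose m r
    have h3 : r.descFactorial c = c.factorial * r.choose c :=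
      Nat.descFactorial_eq_factorial_mul_choose r c
    have h4 : (m - c - j).descFactorial (r - c)
        = (r - c).factorial * (m - c - j).choose (r - c) :=
      Nat.descFactorial_eq_factorial_mul_choose (m - c - j) (r - c)
    have h5 : r.choose c * c.factorial * (r - c).factorial = r.factorial :=
      Nat.choose_mul_factorial_mul_factorial hcr
    calc (m - c - j).choose (r - c) * (m.descFactorial c * (m - c).descFactorial (r - c))
        = (m - c - j).choose (r - c) * ((m - c).descFactorial (r - c) * m.descFactorial c) := by
          ring
      _ = (m - c - j).choose (r - c) * m.descFactorial r := by rw [h1]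
      _ = (m - c - j).choose (r - c) * (r.factorial * m.choose r) := by rw [h2]
      _ = (m - c - j).choose (r - c)
            * ((r.choose c * c.factorial * (r - c).factorial) * m.choose r) := by rw [h5]
      _ = (c.factorial * r.choose c) * ((r - c).factorial * (m - c - j).choose (r - c))
            * m.choose r := by ring
      _ = r.descFactorial c * (m - c - j).descFactorial (r - c) * m.choose r := by
          rw [h3, h4]
  -- the real identity
  have hid : (((m - c - j).choose (r - c) : ℝ)) / (m.choose r : ℝ)
      = (∏ i ∈ Finset.range c, ((r - i : ℕ) : ℝ) / ((m - i : ℕ) : ℝ))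
        * ∏ l ∈ Finset.range (r - c), ((m - c - j - l : ℕ) : ℝ) / ((m - c - l : ℕ) : ℝ) := by
    rw [Finset.prod_div_distrib, Finset.prod_div_distrib]
    have e1 : ∏ i ∈ Finset.range c, ((r - i : ℕ) : ℝ) = (r.descFactorial c : ℝ) := by
      rw [Nat.descFactorial_eq_prod_range]; push_cast; ring
    have e2 : ∏ i ∈ Finset.range c, ((m - i : ℕ) : ℝ) = (m.descFactorial c : ℝ) := by
      rw [Nat.descFactorial_eq_prod_range]; push_cast; ring
    have e3 : ∏ l ∈ Finset.range (r - c), ((m - c - j - l : ℕ) : ℝ)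
        = ((m - c - j).descFactorial (r - c) : ℝ) := by
      rw [Nat.descFactorial_eq_prod_range]; push_cast; ring
    have e4 : ∏ l ∈ Finset.range (r - c), ((m - c - l : ℕ) : ℝ)
        = ((m - c).descFactorial (r - c) : ℝ) := by
      rw [Nat.descFactorial_eq_prod_range]; push_cast; ring
    rw [e1, e2, e3, e4]
    have h1 : (m.choose r : ℝ) ≠ 0 := by positivity
    have h2 : (m.descFactorial c : ℝ) ≠ 0 := by positivity
    have h3 : ((m - c).descFactorial (r - c) : ℝ) ≠ 0 := by positivity
    field_simp
    have hnat' := congrArg (fun n : ℕ => (n : ℝ)) hnat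
    push_cast at hnat'
    linear_combination hnat'
  rw [ge_iff_le, hid]
  have hP1 : 0 ≤ ∏ i ∈ Finset.range c, ((r - i : ℕ) : ℝ) / ((m - i : ℕ) : ℝ) :=
    Finset.prod_nonneg fun i _ => by positivity
  apply mul_le_mul_of_nonneg_left _ hP1
  -- now the analytic bound on the second product
  set b : ℝ := ((c : ℝ) - 1) / c with hb
  have hc0' : (0 : ℝ) < c := by positivity
  have hbpos : 0 < b := by
    apply div_pos _ hc0'
    have : (2 : ℝ) ≤ (c : ℝ) := by exact_mod_cast hc
    linarith
  have hble : b ≤ 1 := by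
    rw [hb, div_le_one hc0']; linarith
  set L : ℝ := Real.log b with hL
  have hLle : L ≤ 0 := Real.log_nonpos hbpos.le hble
  have hcL : (c : ℝ) * L ≤ 0 := mul_nonpos_of_nonneg_of_nonpos hc0'.le hLle
  -- per-term facts
  have hdenle : ∀ l ∈ Finset.range (r - c), m - r + 1 ≤ m - c - l := by
    intro l hl
    simp only [Finset.mem_range] at hl
    omega
  have hdenpos : ∀ l ∈ Finset.range (r - c), 0 < m - c - l := by
    intro l hl
    have := hdenle l hl
    omega
  have hnum : ∀ l ∈ Finset.range (r - c), j ≤ m - c - l ∧ c * j ≤ m - c - l := by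
    intro l hl
    have := hdenle l hl
    omega
  -- each factor equals 1 - x l with x l = j/(m-c-l)
  have hterm : ∀ l ∈ Finset.range (r - c),
      Real.exp ((c : ℝ) * L * ((j : ℝ) / ((m - c - l : ℕ) : ℝ)))
        ≤ ((m - c - j - l : ℕ) : ℝ) / ((m - c - l : ℕ) : ℝ) := by
    intro l hl
    obtain ⟨hj1, hj2⟩ := hnum l hl
    have hd0 : (0 : ℝ) < ((m - c - l : ℕ) : ℝ) := by exact_mod_cast hdenpos l hl
    have hx0 : 0 ≤ (j : ℝ) / ((m - c - l : ℕ) : ℝ) := by positivity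
    have hx1 : (c : ℝ) * ((j : ℝ) / ((m - c - l : ℕ) : ℝ)) ≤ 1 := by
      rw [mul_div_assoc', div_le_one hd0]
      exact_mod_cast hj2
    have heq : ((m - c - j - l : ℕ) : ℝ) / ((m - c - l : ℕ) : ℝ)
        = 1 - (j : ℝ) / ((m - c - l : ℕ) : ℝ) := by
      have hnn : (m - c - j - l : ℕ) = (m - c - l) - j := by omega
      rw [hnn, Nat.cast_sub hj1]
      field_simp
    rw [heq]
    exact exp_le_one_sub_aux hc hx0 hx1
  -- sum bound
  have hsum : ∑ l ∈ Finset.range (r - c), (j : ℝ) / ((m - c - l : ℕ) : ℝ) ≤ 1 := by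
    have hD : (0 : ℝ) < ((m - r + 1 : ℕ) : ℝ) := by
      have : 0 < m - r + 1 := by omega
      exact_mod_cast this
    have hstep : ∑ l ∈ Finset.range (r - c), (j : ℝ) / ((m - c - l : ℕ) : ℝ)
        ≤ ∑ _l ∈ Finset.range (r - c), (j : ℝ) / ((m - r + 1 : ℕ) : ℝ) := by
      apply Finset.sum_le_sum
      intro l hl
      have hd0 : (0 : ℝ) < ((m - c - l : ℕ) : ℝ) := by exact_mod_cast hdenpos l hl
      have hle : ((m - r + 1 : ℕ) : ℝ) ≤ ((m - c - l : ℕ) : ℝ) := by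
        exact_mod_cast hdenle l hl
      gcongr
    refine le_trans hstep ?_
    rw [Finset.sum_const, Finset.card_range, nsmul_eq_mul]
    rw [mul_div_assoc', div_le_one hD]
    have : (r - c) * j ≤ m - r + 1 := by omega
    exact_mod_cast this
  calc b ^ c = Real.exp ((c : ℝ) * L) := by
        rw [Real.exp_nat_mul, Real.exp_log hbpos]
    _ ≤ Real.exp ((c : ℝ) * L * ∑ l ∈ Finset.range (r - c), (j : ℝ) / ((m - c - l : ℕ) : ℝ)) := by
        apply Real.exp_le_exp.2
        calc (c : ℝ) * L = (c : ℝ) * L * 1 := by ring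
          _ ≤ _ := mul_le_mul_of_nonpos_left hsum hcL
    _ = ∏ l ∈ Finset.range (r - c),
          Real.exp ((c : ℝ) * L * ((j : ℝ) / ((m - c - l : ℕ) : ℝ))) := by
        rw [← Real.exp_sum, Finset.mul_sum]
    _ ≤ ∏ l ∈ Finset.range (r - c), ((m - c - j - l : ℕ) : ℝ) / ((m - c - l : ℕ) : ℝ) :=
        Finset.prod_le_prod (fun l _ => (Real.exp_pos _).le) hterm
end

section
/- Let T: ℕ → ℝ be a convex nondecreasing function with T(0)=0, let n_1, …, n_m be nonnegative integers summing to n, and let r ≤ m. Then ∑_{R ⊆ {1,…,m}, |R|=r} T(∑_{i∈R} n_i) ≤ C(m, r) · (1/m) · ∑_{i=1}^{m} T(r·n_i). -/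
open Finset

lemma count_filter_mem (s : Finset ℕ) (i : ℕ) (hi : i ∈ s) (r : ℕ) :
    ((s.powersetCard (r+1)).filter (fun R => i ∈ R)).card
      = (s.card - 1).choose r := by
  rw [← Finset.card_erase_of_mem hi, ← Finset.card_powersetCard r (s.erase i)]
  apply Finset.card_bij (fun R _ => R.erase i)
  · rintro R hR
    simp only [mem_filter, mem_powersetCard] at hR
    simp only [mem_powersetCard]
    exact ⟨Finset.erase_subset_erase _ hR.1.1,
      by rw [Finset.card_erase_of_mem hR.2, hR.1.2]; rfl⟩
  · rintro R hR R' hR' h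
    simp only [mem_filter] at hR hR'
    rw [← Finset.insert_erase hR.2, ← Finset.insert_erase hR'.2, h]
  · rintro A hA
    simp only [mem_powersetCard] at hA
    have hiA : i ∉ A := fun h => (Finset.notMem_erase i s) (hA.1 h)
    refine ⟨insert i A, ?_, by simp [hiA]⟩
    simp only [mem_filter, mem_powersetCard]
    exact ⟨⟨Finset.insert_subset hi (hA.1.trans (Finset.erase_subset _ _)),
      by rw [Finset.card_insert_of_notMem hiA, hA.2]⟩, Finset.mem_insert_self _ _⟩

/-- for a convex nondecreasing `T` with `T(0)=0` and nonnegative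
integers `n_1,…,n_m` summing to `n`, and `r ≤ m`,
`∑_{|R|=r} T(∑_{i∈R} n_i) ≤ C(m,r)·(1/m)·∑_i T(r·n_i)`. -/
theorem sum_convex_subset_sums_le (T : ℝ → ℝ)
    (hconv : ConvexOn ℝ (Set.Ici (0 : ℝ)) T)
    (hmono : MonotoneOn T (Set.Ici (0 : ℝ))) (hT0 : T 0 = 0)
    (m r n : ℕ) (hrm : r ≤ m) (nn : ℕ → ℕ)
    (hn : ∑ i ∈ Finset.range m, nn i = n) :
    ∑ R ∈ (Finset.range m).powersetCard r, T (∑ i ∈ R, (nn i : ℝ))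
      ≤ (m.choose r : ℝ) * (1 / m) * ∑ i ∈ Finset.range m, T (r * nn i) := by
  rcases Nat.eq_zero_or_pos r with rfl | hr
  · simp [Finset.powersetCard_zero, hT0]
  have hm : 0 < m := lt_of_lt_of_le hr hrm
  have hrR : (0:ℝ) < r := by exact_mod_cast hr
  -- Jensen step
  have key : ∀ R ∈ (Finset.range m).powersetCard r,
      T (∑ i ∈ R, (nn i : ℝ)) ≤ (1/r) * ∑ i ∈ R, T (r * nn i) := by
    intro R hR
    rw [Finset.mem_powersetCard] at hR
    have h1 : ∑ _i ∈ R, (1/(r:ℝ)) = 1 := by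
      rw [Finset.sum_const, hR.2, nsmul_eq_mul]; field_simp
    have := hconv.map_sum_le (t := R) (w := fun _ => 1/(r:ℝ))
      (p := fun i => (r:ℝ) * nn i)
      (fun i _ => by positivity) h1
      (fun i _ => by
        simp only [Set.mem_Ici]; positivity)
    rw [Finset.mul_sum]
    refine le_trans (le_of_eq ?_) (le_trans this (le_of_eq rfl))
    congr 1
    rw [Finset.sum_congr rfl (fun i _ => ?_)]
    rw [smul_eq_mul]; field_simp
  calc ∑ R ∈ (Finset.range m).powersetCard r, T (∑ i ∈ R, (nn i : ℝ))
      ≤ ∑ R ∈ (Finset.range m).powersetCard r, (1/r) * ∑ i ∈ R, T (r * nn i) :=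
        Finset.sum_le_sum key
    _ = (1/r) * ∑ R ∈ (Finset.range m).powersetCard r, ∑ i ∈ R, T (r * nn i) := by
        rw [Finset.mul_sum]
    _ = (1/r) * ∑ i ∈ Finset.range m,
          (((m-1).choose (r-1) : ℝ) * T (r * nn i)) := by
        congr 1
        have step : ∀ R ∈ (Finset.range m).powersetCard r,
            ∑ i ∈ R, T (r * nn i)
              = ∑ i ∈ Finset.range m, if i ∈ R then T (r * nn i) else 0 := by
          intro R hR
          rw [Finset.mem_powersetCard] at hR
          rw [Finset.sum_ite_mem, Finset.inter_eq_right.2 hR.1]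
        rw [Finset.sum_congr rfl step, Finset.sum_comm]
        refine Finset.sum_congr rfl (fun i hi => ?_)
        rw [← Finset.sum_filter, Finset.sum_const, nsmul_eq_mul]
        congr 1
        obtain ⟨r', rfl⟩ : ∃ r', r = r' + 1 := ⟨r - 1, (Nat.succ_pred_eq_of_pos hr).symm⟩
        rw [count_filter_mem _ _ hi]
        simp [Finset.card_range]
    _ = (m.choose r : ℝ) * (1 / m) * ∑ i ∈ Finset.range m, T (r * nn i) := by
        rw [← Finset.mul_sum, ← mul_assoc]
        congr 1
        have hmR : (0:ℝ) < m := by exact_mod_cast hm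
        have : (m:ℕ) * (m-1).choose (r-1) = m.choose r * r := by
          obtain ⟨r', rfl⟩ : ∃ r', r = r' + 1 := ⟨r - 1, (Nat.succ_pred_eq_of_pos hr).symm⟩
          obtain ⟨m', rfl⟩ : ∃ m', m = m' + 1 := ⟨m - 1, (Nat.succ_pred_eq_of_pos hm).symm⟩
          simpa [Nat.succ_sub_one, mul_comm] using Nat.add_one_mul_choose_eq m' r'
        have := congrArg (fun k : ℕ => (k:ℝ)) this
        push_cast at this
        field_simp
        linarith [this]
end
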